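/- Let G = M ⋊ ⟨t⟩ with ⟨t⟩ ≅ ℤ, generated by S ∪ {t} with S = {m_1,…,m_ℓ} ⊆ M. Let F be the free group on m_1,…,m_ℓ,t, let R be the kernel of F → G, let R_n be the normal closure in F of R intersected with the n-ball, and let R'_n be the kernel of F → G_n, where G_n is the HNN-extension of M_{[0,n]} along the conjugation-by-t isomorphism M_{[0,n-1]} → M_{[1,n]} (with M_{[u,v]} the subgroup of M generated by ⋃_{u ≤ k ≤ v} t^k S t^{-k}). Then R_{2n+3} ⊆ R'_n. -/

import Mathlib

set_option maxHeartbeats 1000000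

def wordLen {S : Type*} [DecidableEq S] (w : FreeGroup S) : ℕ := w.toWord.length

namespace RelBall
abbrev Letter (ℓ : ℕ) := (Fin ℓ ⊕ Unit) × Bool
def expL {ℓ : ℕ} (x : Letter ℓ) : ℤ := Sum.elim (fun _ => (0:ℤ)) (fun _ => cond x.2 1 (-1)) x.1
def Esum {ℓ : ℕ} (L : List (Letter ℓ)) : ℤ := (L.map expL).sum
def tcnt {ℓ : ℕ} (L : List (Letter ℓ)) : ℤ := (L.map fun x => |expL x|).sum
variable {ℓ : ℕ}
@[simp] lemma Esum_nil : Esum ([] : List (Letter ℓ)) = 0 := rfl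
@[simp] lemma Esum_cons (x : Letter ℓ) (L : List (Letter ℓ)) :
    Esum (x :: L) = expL x + Esum L := by simp [Esum]
lemma Esum_append (L₁ L₂ : List (Letter ℓ)) : Esum (L₁ ++ L₂) = Esum L₁ + Esum L₂ := by
  simp [Esum]
lemma tcnt_append (L₁ L₂ : List (Letter ℓ)) : tcnt (L₁ ++ L₂) = tcnt L₁ + tcnt L₂ := by
  simp [tcnt]
@[simp] lemma tcnt_cons (x : Letter ℓ) (L : List (Letter ℓ)) :
    tcnt (x :: L) = |expL x| + tcnt L := by simp [tcnt]
lemma abs_Esum_le (L : List (Letter ℓ)) : |Esum L| ≤ tcnt L := by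
  induction L with
  | nil => simp [tcnt]
  | cons x L ih =>
    rw [Esum_cons, tcnt_cons]
    exact (abs_add_le _ _).trans (by linarith)
lemma abs_expL_le (x : Letter ℓ) : |expL x| ≤ 1 := by
  rcases x with ⟨a | a, b⟩ <;> cases b <;> simp [expL]
lemma expL_of_isLeft (x : Letter ℓ) (h : x.1.isLeft = true) : expL x = 0 := by
  rcases x with ⟨a | a, b⟩ <;> simp_all [expL]
lemma tcnt_le_length (L : List (Letter ℓ)) : tcnt L ≤ L.length := by
  induction L with
  | nil => simp [tcnt]
  | cons x L ih =>
    rw [tcnt_cons]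
    have := abs_expL_le x
    simp only [List.length_cons]
    push_cast
    linarith

lemma key_comb_le (L : List (Letter ℓ)) (hE : Esum L = 0) {nn : ℕ} (hlen : L.length ≤ 2*nn+3)
    {i j : ℕ} (hij : i ≤ j) (hi : i < L.length) (hj : j < L.length)
    (hmi : (L.get ⟨i,hi⟩).1.isLeft = true) (hmj : (L.get ⟨j,hj⟩).1.isLeft = true) :
    |Esum (L.take j) - Esum (L.take i)| ≤ nn := by
  rcases eq_or_lt_of_le hij with rfl | hij
  · simp
  -- decomposition
  have hdecomp1 : L.take i ++ (L.take j).drop i = L.take j := by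
    conv_rhs => rw [← List.take_append_drop i (L.take j)]
    rw [List.take_take, min_eq_left hij.le]
  have hilen : i < (L.take j).length := by
    rw [List.length_take]; exact lt_min hij hi
  have hmid : (L.take j).drop i = L[i] :: (L.take j).drop (i+1) := by
    rw [List.drop_eq_getElem_cons hilen, List.getElem_take]
  have hdrop : L.drop j = L[j] :: L.drop (j+1) := List.drop_eq_getElem_cons hj
  have hLdec : L.take i ++ ((L.take j).drop i ++ L.drop j) = L := by
    rw [← List.append_assoc, hdecomp1, List.take_append_drop]
  -- Esum relations
  have h1 : Esum (L.take j) = Esum (L.take i) + Esum ((L.take j).drop i) := by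
    have := Esum_append (L.take i) ((L.take j).drop i)
    rw [hdecomp1] at this
    exact this
  have h2 : Esum (L.take j) + Esum (L.drop j) = 0 := by
    rw [← Esum_append, List.take_append_drop, hE]
  -- tcnt bounds
  have e1 : expL (L[i] : Letter ℓ) = 0 := expL_of_isLeft _ hmi
  have e2 : expL (L[j] : Letter ℓ) = 0 := expL_of_isLeft _ hmj
  have t1 : tcnt ((L.take j).drop i) ≤ ((L.take j).drop i).length - 1 := by
    rw [hmid, tcnt_cons, e1, abs_zero]
    have := tcnt_le_length ((L.take j).drop (i+1))
    simp only [List.length_cons]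
    push_cast
    linarith
  have t2 : tcnt (L.drop j) ≤ (L.drop j).length - 1 := by
    rw [hdrop, tcnt_cons, e2, abs_zero]
    have := tcnt_le_length (L.drop (j+1))
    simp only [List.length_cons]
    push_cast
    linarith
  have t3 : tcnt (L.take i) ≤ (L.take i).length := tcnt_le_length _
  have lensum : ((L.take i).length : ℤ) + ((L.take j).drop i).length + (L.drop j).length
      = L.length := by
    have := congrArg List.length hLdec
    simp only [List.length_append] at this
    push_cast [← this]
    ring
  have a1 := abs_Esum_le (L.take i)
  have a2 := abs_Esum_le ((L.take j).drop i)
  have a3 := abs_Esum_le (L.drop j)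
  have habs : |Esum (L.take j) - Esum (L.take i)| = |Esum ((L.take j).drop i)| := by
    rw [h1]; ring_nf
  rw [habs]
  have hb1 : Esum ((L.take j).drop i) ≤ |Esum ((L.take j).drop i)| := le_abs_self _
  have hlen' : (L.length : ℤ) ≤ 2*nn+3 := by exact_mod_cast hlen
  have key : 2 * |Esum ((L.take j).drop i)| ≤ 2*nn+1 := by
    have habs2 : |Esum ((L.take j).drop i)| ≤ |Esum (L.take i)| + |Esum (L.drop j)| := by
      have : Esum ((L.take j).drop i) = -(Esum (L.take i)) + -(Esum (L.drop j)) := by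
        linarith [h1, h2]
      rw [this]
      exact (abs_add_le _ _).trans (by rw [abs_neg, abs_neg])
    linarith
  omega

lemma key_comb (L : List (Letter ℓ)) (hE : Esum L = 0) {nn : ℕ} (hlen : L.length ≤ 2*nn+3)
    {i j : ℕ} (hi : i < L.length) (hj : j < L.length)
    (hmi : (L.get ⟨i,hi⟩).1.isLeft = true) (hmj : (L.get ⟨j,hj⟩).1.isLeft = true) :
    |Esum (L.take j) - Esum (L.take i)| ≤ nn := by
  rcases le_total i j with h | h
  · exact key_comb_le L hE hlen h hi hj hmi hmj
  · rw [abs_sub_comm]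
    exact key_comb_le L hE hlen h hj hi hmj hmi

def heightsOK (n : ℕ) : ℤ → List (Letter ℓ) → Prop
  | _, [] => True
  | c, x :: L => (x.1.isLeft = true → 0 ≤ c ∧ c ≤ n) ∧ heightsOK n (c + expL x) L

lemma heightsOK_of_forall (n : ℕ) : ∀ (L : List (Letter ℓ)) (c : ℤ),
    (∀ (j : ℕ) (hj : j < L.length), (L.get ⟨j,hj⟩).1.isLeft = true →
      0 ≤ c + Esum (L.take j) ∧ c + Esum (L.take j) ≤ n) → heightsOK n c L := by
  intro L
  induction L with
  | nil => intro c _; trivial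
  | cons x L ih =>
    intro c h
    refine ⟨fun hx => ?_, ih (c + expL x) fun j hj hm => ?_⟩
    · have := h 0 (by simp) (by simpa using hx)
      simpa using this
    · have := h (j+1) (by simpa using Nat.succ_lt_succ hj) (by simpa using hm)
      rw [List.take_succ_cons, Esum_cons] at this
      constructor <;> linarith [this.1, this.2]

lemma exists_heightsOK (n : ℕ) (L : List (Letter ℓ)) (hE : Esum L = 0)
    (hlen : L.length ≤ 2*n+3) : ∃ c : ℤ, heightsOK n c L := by
  classical
  by_cases hex : ∃ (j : ℕ) (hj : j < L.length), (L.get ⟨j,hj⟩).1.isLeft = true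
  · obtain ⟨j₀, hj₀, hm₀⟩ := hex
    set S : Finset ℕ := (Finset.range L.length).filter
      (fun j => (L.getD j (Sum.inr (), true)).1.isLeft = true) with hS
    have hmemS : ∀ j (hj : j < L.length), (j ∈ S ↔ (L.get ⟨j,hj⟩).1.isLeft = true) := by
      intro j hj
      simp only [hS, Finset.mem_filter, Finset.mem_range]
      rw [List.getD_eq_getElem L _ hj]
      simp [hj, List.get_eq_getElem]
    have hne : S.Nonempty := ⟨j₀, (hmemS j₀ hj₀).mpr hm₀⟩
    obtain ⟨j₁, hj₁S, hmin⟩ := S.exists_min_image (fun j => Esum (L.take j)) hne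
    have hj₁ : j₁ < L.length := by
      have := hj₁S; rw [hS, Finset.mem_filter, Finset.mem_range] at this; exact this.1
    have hm₁ : (L.get ⟨j₁,hj₁⟩).1.isLeft = true := (hmemS j₁ hj₁).mp hj₁S
    refine ⟨-(Esum (L.take j₁)), heightsOK_of_forall n L _ fun j hj hm => ?_⟩
    have hjS : j ∈ S := (hmemS j hj).mpr hm
    have h1 := hmin j hjS
    have h2 := key_comb L hE hlen hj₁ hj hm₁ hm
    rw [abs_le] at h2
    constructor <;> linarith [h2.1, h2.2]
  · push_neg at hex
    exact ⟨0, heightsOK_of_forall n L 0 fun j hj hm => absurd hm (hex j hj)⟩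

variable {G : Type*} [Group G] (t : G) {ℓ : ℕ} (m : Fin ℓ → G)
variable (Msub : ℤ → ℤ → Subgroup G)
variable (hMsub : ∀ u v : ℤ, Msub u v =
      Subgroup.closure {x | ∃ (i : Fin ℓ) (k : ℤ), u ≤ k ∧ k ≤ v ∧
        x = t ^ k * m i * t ^ (-k)})

include hMsub in
lemma Msub_mono {u v u' v' : ℤ} (hu : u' ≤ u) (hv : v ≤ v') : Msub u v ≤ Msub u' v' := by
  rw [hMsub, hMsub]
  apply Subgroup.closure_mono
  rintro x ⟨i, k, h1, h2, rfl⟩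
  exact ⟨i, k, le_trans hu h1, le_trans h2 hv, rfl⟩

include hMsub in
lemma Msub_conj (j : ℤ) {u v : ℤ} {x : G} (hx : x ∈ Msub u v) :
    t ^ j * x * t ^ (-j) ∈ Msub (u + j) (v + j) := by
  rw [hMsub] at hx
  rw [hMsub]
  induction hx using Subgroup.closure_induction with
  | mem y hy =>
    obtain ⟨i, k, h1, h2, rfl⟩ := hy
    apply Subgroup.subset_closure
    refine ⟨i, k + j, by linarith, by linarith, ?_⟩
    rw [show -(k+j) = -k + -j by ring, zpow_add, zpow_add]
    group
  | one => simpa using Subgroup.one_mem _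
  | mul y z hy hz hy' hz' =>
    have : t ^ j * (y * z) * t ^ (-j) = (t ^ j * y * t ^ (-j)) * (t ^ j * z * t ^ (-j)) := by
      group
    rw [this]; exact Subgroup.mul_mem _ hy' hz'
  | inv y hy hy' =>
    have : t ^ j * y⁻¹ * t ^ (-j) = (t ^ j * y * t ^ (-j))⁻¹ := by group
    rw [this]; exact Subgroup.inv_mem _ hy'

include hMsub in
lemma m_mem_Msub (i : Fin ℓ) {v : ℤ} (hv : 0 ≤ v) : m i ∈ Msub 0 v := by
  rw [hMsub]
  exact Subgroup.subset_closure ⟨i, 0, le_refl _, hv, by simp⟩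

variable (n : ℕ)
variable (φn : (Msub 0 ((n : ℤ) - 1)).subgroupOf (Msub 0 (n : ℤ)) ≃*
      (Msub 1 (n : ℤ)).subgroupOf (Msub 0 (n : ℤ)))
variable (hφn : ∀ x, ((φn x : (Msub 0 (n : ℤ))) : G) = t * ((x : (Msub 0 (n : ℤ))) : G) * t⁻¹)

include hMsub hφn in
lemma conjA : ∀ (e : ℕ), (e : ℤ) ≤ n → ∀ (x : G), x ∈ Msub 0 ((n : ℤ) - e) →
    ∀ (hx1 : x ∈ Msub 0 (n:ℤ)) (hx2 : t ^ (e:ℤ) * x * t ^ (-(e:ℤ)) ∈ Msub 0 (n:ℤ)),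
      (HNNExtension.t : HNNExtension (Msub 0 (n:ℤ)) _ _ φn) ^ (e:ℤ)
          * HNNExtension.of (⟨x, hx1⟩ : Msub 0 (n:ℤ)) * HNNExtension.t ^ (-(e:ℤ))
        = HNNExtension.of ⟨t ^ (e:ℤ) * x * t ^ (-(e:ℤ)), hx2⟩ := by
  intro e
  induction e with
  | zero =>
    intro _ x hx hx1 hx2
    simp only [Nat.cast_zero, neg_zero, zpow_zero, one_mul, mul_one]
  | succ e ih =>
    intro he x hx hx1 hx2
    have hx' : x ∈ Msub 0 ((n:ℤ) - 1) :=
      Msub_mono t m Msub hMsub (le_refl _) (by push_cast at he ⊢; linarith) hx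
    set a : (Msub 0 ((n:ℤ)-1)).subgroupOf (Msub 0 (n:ℤ)) :=
      ⟨⟨x, hx1⟩, by rwa [Subgroup.mem_subgroupOf]⟩ with ha
    have key := HNNExtension.equiv_eq_conj (φ := φn) a
    have hval : ((φn a : Msub 0 (n:ℤ)) : G) = t * x * t⁻¹ := hφn a
    have hy1 : t * x * t⁻¹ ∈ Msub 0 (n:ℤ) := hval ▸ (φn a : Msub 0 (n:ℤ)).2
    have key2 : (HNNExtension.t : HNNExtension (Msub 0 (n:ℤ)) _ _ φn) * HNNExtension.of (⟨x, hx1⟩ : Msub 0 (n:ℤ)) * HNNExtension.t⁻¹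
        = HNNExtension.of (⟨t * x * t⁻¹, hy1⟩ : Msub 0 (n:ℤ)) := by
      rw [← key]
      congr 1
      exact Subtype.ext hval
    -- membership of t*x*t⁻¹ in Msub 0 (n - e)
    have hy : t * x * t⁻¹ ∈ Msub 0 ((n:ℤ) - e) := by
      have := Msub_conj t m Msub hMsub 1 hx
      rw [zpow_one, zpow_neg, zpow_one] at this
      refine Msub_mono t m Msub hMsub (by norm_num) ?_ this
      push_cast; linarith
    have hgrp : t ^ (e:ℤ) * (t * x * t⁻¹) * t ^ (-(e:ℤ))
        = t ^ ((e+1 : ℕ):ℤ) * x * t ^ (-((e+1:ℕ):ℤ)) := by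
      push_cast
      rw [show ((e:ℤ)+1) = (e:ℤ) + 1 by ring, zpow_add, zpow_one,
        show -((e:ℤ)+1) = -1 + -(e:ℤ) by ring, zpow_add]
      group
    have hy2 : t ^ (e:ℤ) * (t * x * t⁻¹) * t ^ (-(e:ℤ)) ∈ Msub 0 (n:ℤ) := hgrp ▸ hx2
    have ihe := ih (by push_cast at he ⊢; linarith) (t * x * t⁻¹) hy hy1 hy2
    have hsplit : (HNNExtension.t : HNNExtension (Msub 0 (n:ℤ)) _ _ φn) ^ (((e+1:ℕ)):ℤ)
          * HNNExtension.of (⟨x, hx1⟩ : Msub 0 (n:ℤ)) * HNNExtension.t ^ (-((e+1:ℕ):ℤ))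
        = HNNExtension.t ^ (e:ℤ) *
          (HNNExtension.t * HNNExtension.of (⟨x, hx1⟩ : Msub 0 (n:ℤ)) * HNNExtension.t⁻¹)
          * HNNExtension.t ^ (-(e:ℤ)) := by
      push_cast
      rw [show ((e:ℤ)+1) = (e:ℤ) + 1 by ring, zpow_add, zpow_one,
        show -((e:ℤ)+1) = -1 + -(e:ℤ) by ring, zpow_add]
      group
    rw [hsplit, key2, ihe]
    congr 1
    exact Subtype.ext hgrp

include hMsub hφn in
lemma lemB (hmem : ∀ i, m i ∈ Msub 0 (n:ℤ)) :
    ∀ (L : List (Letter ℓ)) (c : ℤ), heightsOK n c L →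
      ∃ g : Msub 0 (n:ℤ),
        (g : G) = t ^ c *
          (L.map fun x => cond x.2 (Sum.elim m (fun _ => t) x.1)
            ((Sum.elim m (fun _ => t) x.1)⁻¹)).prod * (t ^ (c + Esum L))⁻¹ ∧
        (HNNExtension.t : HNNExtension (Msub 0 (n:ℤ)) _ _ φn) ^ c *
          (L.map fun x => cond x.2
            (Sum.elim (fun i => HNNExtension.of (⟨m i, hmem i⟩ : Msub 0 (n:ℤ)))
              (fun _ => HNNExtension.t) x.1)
            ((Sum.elim (fun i => HNNExtension.of (⟨m i, hmem i⟩ : Msub 0 (n:ℤ)))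
              (fun _ => HNNExtension.t) x.1)⁻¹)).prod * (HNNExtension.t ^ (c + Esum L))⁻¹
        = HNNExtension.of g := by
  intro L
  induction L with
  | nil =>
    intro c _
    refine ⟨1, by simp, by simp⟩
  | cons x L ih =>
    rcases x with ⟨a, b⟩
    intro c hOK
    obtain ⟨hb, hrest⟩ := hOK
    rcases a with i | u
    · -- m-letter
      have hc := hb rfl
      obtain ⟨e, rfl⟩ := Int.eq_ofNat_of_zero_le hc.1
      have hexp : expL ((Sum.inl i, b) : Letter ℓ) = 0 := rfl
      rw [hexp, add_zero] at hrest
      obtain ⟨g, hg1, hg2⟩ := ih (e:ℤ) hrest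
      have hk : t ^ (e:ℤ) * m i * t ^ (-(e:ℤ)) ∈ Msub 0 (n:ℤ) := by
        rw [hMsub]
        exact Subgroup.subset_closure ⟨i, e, by positivity, hc.2, rfl⟩
      have hA := conjA t m Msub hMsub n φn hφn e hc.2 (m i)
        (m_mem_Msub t m Msub hMsub i (by linarith [hc.2])) (hmem i) hk
      set gnew : Msub 0 (n:ℤ) := ⟨t ^ (e:ℤ) * m i * t ^ (-(e:ℤ)), hk⟩ with hgnew
      refine ⟨(cond b gnew gnew⁻¹) * g, ?_, ?_⟩
      · cases b
        · simp only [List.map_cons, List.prod_cons, Esum_cons, hexp, zero_add, cond_false,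
            Sum.elim_inl, Subgroup.coe_mul, InvMemClass.coe_inv]
          rw [hg1, show (gnew : G) = t ^ (e:ℤ) * m i * t ^ (-(e:ℤ)) from rfl]
          group
        · simp only [List.map_cons, List.prod_cons, Esum_cons, hexp, zero_add, cond_true,
            Sum.elim_inl, Subgroup.coe_mul, InvMemClass.coe_inv]
          rw [hg1, show (gnew : G) = t ^ (e:ℤ) * m i * t ^ (-(e:ℤ)) from rfl]
          group
      · have rearr : ∀ (O P Q : HNNExtension (Msub 0 (n:ℤ)) _ _ φn),
            HNNExtension.t ^ (e:ℤ) * (O * P) * Q =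
            (HNNExtension.t ^ (e:ℤ) * O * HNNExtension.t ^ (-(e:ℤ))) *
              (HNNExtension.t ^ (e:ℤ) * P * Q) := by
          intro O P Q
          rw [zpow_neg]
          group
        cases b
        · simp only [List.map_cons, List.prod_cons, Esum_cons, hexp, zero_add, cond_false,
            Sum.elim_inl]
          have hinv : (HNNExtension.t : HNNExtension (Msub 0 (n:ℤ)) _ _ φn) ^ (e:ℤ) *
              (HNNExtension.of (⟨m i, hmem i⟩ : Msub 0 (n:ℤ)))⁻¹ * HNNExtension.t ^ (-(e:ℤ))
              = HNNExtension.of gnew⁻¹ := by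
            rw [map_inv, ← hA, zpow_neg, mul_inv_rev, mul_inv_rev]
            group
          rw [rearr, hinv, hg2, ← map_mul]
        · simp only [List.map_cons, List.prod_cons, Esum_cons, hexp, zero_add, cond_true,
            Sum.elim_inl]
          rw [rearr, hA, hg2, ← map_mul]
    · -- t-letter
      cases b
      · -- inverse t
        have hexp : expL ((Sum.inr u, false) : Letter ℓ) = -1 := rfl
        rw [hexp] at hrest
        obtain ⟨g, hg1, hg2⟩ := ih (c + -1) hrest
        refine ⟨g, ?_, ?_⟩
        · simp only [List.map_cons, List.prod_cons, Esum_cons, hexp, cond_false, Sum.elim_inr]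
          rw [hg1, show c + (-1 + Esum L) = (c + -1) + Esum L by ring, ← mul_assoc]
          congr 2
          rw [show c + -1 = c - 1 by ring, zpow_sub_one]
        · simp only [List.map_cons, List.prod_cons, Esum_cons, hexp, cond_false, Sum.elim_inr]
          rw [← hg2, show c + (-1 + Esum L) = (c + -1) + Esum L by ring, ← mul_assoc]
          congr 2
          rw [show c + -1 = c - 1 by ring, zpow_sub_one]
      · -- t
        have hexp : expL ((Sum.inr u, true) : Letter ℓ) = 1 := rfl
        rw [hexp] at hrest
        obtain ⟨g, hg1, hg2⟩ := ih (c + 1) hrest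
        refine ⟨g, ?_, ?_⟩
        · simp only [List.map_cons, List.prod_cons, Esum_cons, hexp, cond_true, Sum.elim_inr]
          rw [hg1, show c + (1 + Esum L) = (c + 1) + Esum L by ring, ← mul_assoc, ← zpow_add_one]
        · simp only [List.map_cons, List.prod_cons, Esum_cons, hexp, cond_true, Sum.elim_inr]
          rw [← hg2, show c + (1 + Esum L) = (c + 1) + Esum L by ring, ← mul_assoc, ← zpow_add_one]


variable {M : Subgroup G} (hmM : ∀ i, m i ∈ M) (π : G →* Multiplicative ℤ)
  (hπker : π.ker = M) (hπt : π t = Multiplicative.ofAdd 1)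

include hπker hπt hmM in
lemma pi_prod : ∀ L : List (Letter ℓ),
    π ((L.map fun x => cond x.2 (Sum.elim m (fun _ => t) x.1)
      ((Sum.elim m (fun _ => t) x.1)⁻¹)).prod) = Multiplicative.ofAdd (Esum L) := by
  intro L
  induction L with
  | nil => simp
  | cons x L ih =>
    have hm1 : ∀ i, π (m i) = 1 := by
      intro i
      have : m i ∈ π.ker := by rw [hπker]; exact hmM i
      exact this
    rcases x with ⟨a | u, b⟩ <;> cases b <;>
      simp [expL, map_mul, ih, hm1, hπt, ← ofAdd_add] <;>
      rw [show (-1 : ℤ) + Esum L = -(1 - Esum L) by ring, ofAdd_neg, ofAdd_sub] <;>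
      simp [hπt, ih, div_eq_mul_inv, mul_comm]

end RelBall

theorem relations_ball_in_HNN_kernel {G : Type*} [Group G]
    (M : Subgroup G) (t : G) (ℓ : ℕ) (m : Fin ℓ → G) (hmM : ∀ i, m i ∈ M)
    -- `G = M ⋊ ℤ` with the `ℤ` factor generated by `t`
    (π : G →* Multiplicative ℤ) (hπker : π.ker = M)
    (hπt : π t = Multiplicative.ofAdd 1)
    -- `S ∪ {t}` generates `G`
    (hgen : Subgroup.closure (Set.range m ∪ {t}) = ⊤)
    -- the subgroups `M_{[u,v]}` generated by `⋃_{u ≤ k ≤ v} t^k S t^{-k}`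
    (Msub : ℤ → ℤ → Subgroup G)
    (hMsub : ∀ u v : ℤ, Msub u v =
      Subgroup.closure {x | ∃ (i : Fin ℓ) (k : ℤ), u ≤ k ∧ k ≤ v ∧
        x = t ^ k * m i * t ^ (-k)})
    (n : ℕ)
    (hmem : ∀ i, m i ∈ Msub 0 (n : ℤ))
    -- the conjugation-by-`t` isomorphism `M_{[0,n-1]} → M_{[1,n]}`
    (φn : (Msub 0 ((n : ℤ) - 1)).subgroupOf (Msub 0 (n : ℤ)) ≃*
      (Msub 1 (n : ℤ)).subgroupOf (Msub 0 (n : ℤ)))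
    (hφn : ∀ x, ((φn x : (Msub 0 (n : ℤ))) : G) = t * ((x : (Msub 0 (n : ℤ))) : G) * t⁻¹)
    -- the natural maps from the free group on `m_1, …, m_ℓ, t` to `G` and to `G_n`
    (πG : FreeGroup (Fin ℓ ⊕ Unit) →* G)
    (hπG : πG = FreeGroup.lift (Sum.elim m (fun _ => t)))
    (ψ : FreeGroup (Fin ℓ ⊕ Unit) →*
      HNNExtension (Msub 0 (n : ℤ)) _ _ φn)
    (hψ : ψ = FreeGroup.lift (Sum.elim
      (fun i => HNNExtension.of ⟨m i, hmem i⟩) (fun _ => HNNExtension.t))) :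
    Subgroup.normalClosure {w | w ∈ πG.ker ∧ wordLen w ≤ 2 * n + 3} ≤ ψ.ker := by
  classical
  have key : {w | w ∈ πG.ker ∧ wordLen w ≤ 2 * n + 3} ⊆ (ψ.ker : Set _) := by
    rintro w ⟨hw1, hw2⟩
    rw [SetLike.mem_coe, MonoidHom.mem_ker]
    rw [MonoidHom.mem_ker] at hw1
    set L : List (RelBall.Letter ℓ) := w.toWord with hLdef
    have hwmk : FreeGroup.mk L = w := FreeGroup.mk_toWord
    have hπGval : (L.map fun x => cond x.2 (Sum.elim m (fun _ => t) x.1)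
        ((Sum.elim m (fun _ => t) x.1)⁻¹)).prod = 1 := by
      rw [← FreeGroup.lift_mk, ← hπG, hwmk, hw1]
    have hψval : ψ w = (L.map fun x => cond x.2
        (Sum.elim (fun i => HNNExtension.of (⟨m i, hmem i⟩ : Msub 0 (n:ℤ)))
          (fun _ => HNNExtension.t) x.1)
        ((Sum.elim (fun i => HNNExtension.of (⟨m i, hmem i⟩ : Msub 0 (n:ℤ)))
          (fun _ => HNNExtension.t) x.1)⁻¹)).prod := by
      rw [← hwmk, hψ, FreeGroup.lift_mk]
    have hmM' : ∀ i, m i ∈ M := hmM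
    have hEs : RelBall.Esum L = 0 := by
      have := RelBall.pi_prod t m hmM π hπker hπt L
      rw [hπGval, map_one] at this
      have h2 : Multiplicative.ofAdd (RelBall.Esum L) = Multiplicative.ofAdd (0 : ℤ) := by
        rw [← this]; rfl
      exact Multiplicative.ofAdd.injective h2
    have hlen : L.length ≤ 2 * n + 3 := hw2
    obtain ⟨c, hc⟩ := RelBall.exists_heightsOK n L hEs hlen
    obtain ⟨g, hg1, hg2⟩ := RelBall.lemB t m Msub hMsub n φn hφn hmem L c hc
    have hg_one : g = 1 := by
      apply Subtype.ext
      rw [hg1, hπGval, hEs, add_zero]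
      simp
    rw [hg_one, map_one, hEs, add_zero, ← hψval] at hg2
    calc ψ w = (HNNExtension.t ^ c)⁻¹ *
          (HNNExtension.t ^ c * ψ w * (HNNExtension.t ^ c)⁻¹) * HNNExtension.t ^ c := by group
    _ = 1 := by rw [hg2]; group
  exact Subgroup.normalClosure_le_normal key
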